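/- arXiv:1403.4870 — 5 statements merged into one kernel-verified Lean document; each statement's English description precedes it below -/
import Mathlib

section
/- In a bi-ordered group, if an element g commutes with hⁿ for some nonzero integer n, then g commutes with h. -/
/-- In a bi-ordered group, if `g` commutes with a nonzero power `hⁿ` of `h`,
then `g` commutes with `h`. -/
theorem biorder_commute_of_commute_pow (G : Type*) [Group G] (r : G → G → Prop)
    (hsto : IsStrictTotalOrder G r)
    (hleft : ∀ f g h : G, r g h → r (f * g) (f * h))
    (hright : ∀ f g h : G, r g h → r (g * f) (h * f))
    (g h : G) (n : ℤ) (hn : n ≠ 0) (hcomm : g * h ^ n = h ^ n * g) :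
    g * h = h * g := by
  haveI := hsto
  -- key: strict order on positive powers
  have key : ∀ (a b : G) (m : ℕ), r a b → r (a ^ (m + 1)) (b ^ (m + 1)) := by
    intro a b m hab
    induction m with
    | zero => simpa using hab
    | succ m ih =>
      have h1 : r (a * a ^ (m + 1)) (a * b ^ (m + 1)) := hleft _ _ _ ih
      have h2 : r (a * b ^ (m + 1)) (b * b ^ (m + 1)) := hright _ _ _ hab
      have h3 := trans_of r h1 h2
      simpa [pow_succ'] using h3
  set k := g * h * g⁻¹ with hk
  have hkn : k ^ n = h ^ n := by
    rw [hk, conj_zpow, hcomm, mul_assoc, mul_inv_cancel, mul_one]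
  have hm0 : 0 < n.natAbs := Int.natAbs_pos.mpr hn
  have hkm : k ^ n.natAbs = h ^ n.natAbs := by
    rcases Int.natAbs_eq n with he | he
    · have : k ^ (n.natAbs : ℤ) = h ^ (n.natAbs : ℤ) := by rw [← he]; exact hkn
      rwa [zpow_natCast, zpow_natCast] at this
    · have : k ^ (n.natAbs : ℤ) = h ^ (n.natAbs : ℤ) := by
        have h2 : k ^ (-n) = h ^ (-n) := by rw [zpow_neg, zpow_neg, hkn]
        rw [he] at h2
        simpa using h2
      rwa [zpow_natCast, zpow_natCast] at this
  obtain ⟨m, hm⟩ : ∃ m, n.natAbs = m + 1 := ⟨n.natAbs - 1, by omega⟩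
  rw [hm] at hkm
  have hkh : k = h := by
    rcases trichotomous_of r k h with hlt | heq | hgt
    · exact absurd (hkm ▸ key k h m hlt) (irrefl_of r _)
    · exact heq
    · exact absurd (hkm ▸ key h k m hgt) (irrefl_of r _)
  have := hkh
  rw [hk] at this
  calc g * h = (g * h * g⁻¹) * g := by group
    _ = h * g := by rw [this]
end

section
/- Any group that acts effectively (faithfully) on the real line by orientation-preserving (i.e., strictly increasing) homeomorphisms is left-orderable. -/
/-- A group acting effectively on the real line by orientation-preserving
(strictly increasing) homeomorphisms is left-orderable. -/
theorem leftOrderable_of_faithful_action_on_real_line (G : Type*) [Group G]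
    (φ : G →* Equiv.Perm ℝ)
    (hmono : ∀ g : G, StrictMono (φ g))
    (hfaithful : Function.Injective φ) :
    ∃ r : G → G → Prop, IsStrictTotalOrder G r ∧ ∀ f g h : G, r g h → r (f * g) (f * h) := by
  -- enumeration of the rationals inside ℝ
  obtain ⟨e⟩ : Nonempty (ℕ ≃ ℚ) := ⟨(Denumerable.eqv ℚ).symm⟩
  set q : ℕ → ℝ := fun n => ((e n : ℚ) : ℝ) with hq
  have hdense : DenseRange q := by
    have hr : Set.range q = Set.range ((↑) : ℚ → ℝ) := by
      have : q = ((↑) : ℚ → ℝ) ∘ e := rfl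
      rw [this, Set.range_comp, Equiv.range_eq_univ, Set.image_univ]
    unfold DenseRange
    rw [hr]
    exact Rat.denseRange_cast
  -- each φ g is continuous
  have hcont : ∀ g : G, Continuous (φ g) := by
    intro g
    have := (StrictMono.orderIsoOfSurjective (φ g) (hmono g) (φ g).surjective).continuous
    rwa [StrictMono.coe_orderIsoOfSurjective] at this
  -- map into lexicographic order
  set F : G → Lex (ℕ → ℝ) := fun g => toLex (fun n => φ g (q n)) with hF
  have hFinj : Function.Injective F := by
    intro g h hgh
    apply hfaithful
    ext x
    have : (φ g : ℝ → ℝ) = (φ h : ℝ → ℝ) := by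
      refine Continuous.ext_on hdense (hcont g) (hcont h) ?_
      rintro x ⟨n, rfl⟩
      exact congrFun (congrArg ofLex hgh) n
    exact congrFun this x
  refine ⟨fun g h => F g < F h, ?_, ?_⟩
  · letI ht : IsTrichotomous G (fun g h => F g < F h) := ⟨fun a b => by
      rcases lt_trichotomy (F a) (F b) with h | h | h
      · exact fun h1 _ => absurd h h1
      · exact fun _ _ => hFinj h
      · exact fun _ h2 => absurd h h2⟩
    letI hs : IsStrictOrder G (fun g h => F g < F h) :=
      { irrefl := fun a => lt_irrefl (F a), trans := fun a b c => lt_trans }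
    exact ⟨⟩
  · intro f g h hgh
    obtain ⟨n, heq, hlt⟩ := hgh
    refine ⟨n, fun j hj => ?_, ?_⟩
    · show φ (f * g) (q j) = φ (f * h) (q j)
      simp only [map_mul, Equiv.Perm.mul_apply]
      exact congrArg (φ f) (heq j hj)
    · show φ (f * g) (q n) < φ (f * h) (q n)
      simp only [map_mul, Equiv.Perm.mul_apply]
      exact (hmono f) hlt
end

section
/- For n ≥ 3, the braid group Bₙ is not bi-orderable. -/
/-- The braid relations on `n` generators `σ₀, …, σ_{n-1}` (presenting the
braid group `B_{n+1}`): `σᵢσⱼ = σⱼσᵢ` for `|i - j| > 1` and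
`σᵢσⱼσᵢ = σⱼσᵢσⱼ` for `|i - j| = 1`. -/
def braidRels (n : ℕ) : Set (FreeGroup (Fin n)) :=
  {r | ∃ i j : Fin n, ((i : ℕ) + 1 < j ∨ (j : ℕ) + 1 < i) ∧
      r = FreeGroup.of i * FreeGroup.of j * (FreeGroup.of j * FreeGroup.of i)⁻¹} ∪
  {r | ∃ i j : Fin n, ((j : ℕ) = i + 1 ∨ (i : ℕ) = j + 1) ∧
      r = FreeGroup.of i * FreeGroup.of j * FreeGroup.of i *
        (FreeGroup.of j * FreeGroup.of i * FreeGroup.of j)⁻¹}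

/-- The braid group on `n` strands, with generators `σ₁, …, σ_{n-1}`. -/
abbrev BraidGroup (n : ℕ) : Type := PresentedGroup (braidRels (n - 1))

def BiOrderable (G : Type*) [Group G] : Prop :=
  ∃ r : G → G → Prop, IsStrictTotalOrder G r ∧
    (∀ f g h : G, r g h → r (f * g) (f * h)) ∧
    (∀ f g h : G, r g h → r (g * f) (h * f))

section Aux

/-- Disjoint swaps commute. -/
lemma swap_comm_of_ne' {α : Type*} [DecidableEq α] {a b c d : α}
    (hca : c ≠ a) (hcb : c ≠ b) (hda : d ≠ a) (hdb : d ≠ b) :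
    Equiv.swap a b * Equiv.swap c d = Equiv.swap c d * Equiv.swap a b := by
  have h : Equiv.swap a b * Equiv.swap c d * (Equiv.swap a b)⁻¹ = Equiv.swap c d := by
    rw [← Equiv.swap_apply_apply, Equiv.swap_apply_of_ne_of_ne hca hcb,
      Equiv.swap_apply_of_ne_of_ne hda hdb]
  calc Equiv.swap a b * Equiv.swap c d
      = Equiv.swap a b * Equiv.swap c d * (Equiv.swap a b)⁻¹ * Equiv.swap a b := by group
    _ = Equiv.swap c d * Equiv.swap a b := by rw [h]

/-- Braid relation for adjacent swaps. -/
lemma swap_braid' {α : Type*} [DecidableEq α] {a b c : α}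
    (hab : a ≠ b) (hbc : b ≠ c) (hac : a ≠ c) :
    Equiv.swap a b * Equiv.swap b c * Equiv.swap a b =
      Equiv.swap b c * Equiv.swap a b * Equiv.swap b c := by
  have h1 : Equiv.swap a b * Equiv.swap b c * Equiv.swap a b = Equiv.swap a c := by
    have := Equiv.swap_mul_swap_mul_swap (x := c) (y := b) (z := a) hbc.symm hac.symm
    rwa [Equiv.swap_comm b a, Equiv.swap_comm c b, Equiv.swap_comm a c, Equiv.swap_comm c a]
      at this
  have h2 : Equiv.swap b c * Equiv.swap a b * Equiv.swap b c = Equiv.swap a c := by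
    have := Equiv.swap_mul_swap_mul_swap (x := a) (y := b) (z := c) hab hac
    rwa [Equiv.swap_comm c a] at this
  rw [h1, h2]

/-- In a bi-orderable group, `aba = bab` forces `a = b`. -/
lemma biOrderable_braid_eq {G : Type*} [Group G] (hG : BiOrderable G)
    {a b : G} (h : a * b * a = b * a * b) : a = b := by
  obtain ⟨r, hsto, hl, hr⟩ := hG
  have cube : ∀ x y : G, r x y → r (x * (x * x)) (y * (y * y)) := by
    intro x y hxy
    have h1 : r (x * x) (x * y) := hl x _ _ hxy
    have h2 : r (x * y) (y * y) := hr y _ _ hxy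
    have h3 : r (x * (x * x)) (x * (y * y)) :=
      hl x _ _ (hsto.trans _ _ _ h1 h2)
    have h4 : r (x * (y * y)) (y * (y * y)) := hr (y * y) _ _ hxy
    exact hsto.trans _ _ _ h3 h4
  have hcube : (a * b) * ((a * b) * (a * b)) = (b * a) * ((b * a) * (b * a)) := by
    calc (a * b) * ((a * b) * (a * b)) = (a * b * a) * (b * a * b) := by group
      _ = (b * a * b) * (a * b * a) := by rw [h]
      _ = (b * a) * ((b * a) * (b * a)) := by group
  have hcomm : a * b = b * a := by
    rcases (show r (a * b) (b * a) ∨ a * b = b * a ∨ r (b * a) (a * b) by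
        by_cases h1 : r (a * b) (b * a)
        · exact Or.inl h1
        by_cases h2 : r (b * a) (a * b)
        · exact Or.inr (Or.inr h2)
        exact Or.inr (Or.inl (hsto.trichotomous _ _ h1 h2))) with h1 | h1 | h1
    · exact absurd (hcube ▸ cube _ _ h1) (hsto.irrefl _)
    · exact h1
    · exact absurd (hcube.symm ▸ cube _ _ h1) (hsto.irrefl _)
  have heq : a * a * b = a * b * b := by
    calc a * a * b = a * (a * b) := by group
      _ = a * (b * a) := by rw [hcomm]
      _ = a * b * a := by group
      _ = b * a * b := h
      _ = a * b * b := by rw [← hcomm]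
  exact mul_left_cancel (mul_right_cancel heq)

/-- The map sending `σᵢ` to the adjacent transposition `(i, i+1)` in `Perm ℕ`
respects the braid relations. -/
lemma braid_to_perm (m : ℕ) :
    ∀ r ∈ braidRels m, FreeGroup.lift (fun i : Fin m => Equiv.swap (i : ℕ) (i + 1)) r = 1 := by
  intro r hr
  rcases hr with ⟨i, j, hij, rfl⟩ | ⟨i, j, hij, rfl⟩
  · simp only [map_mul, map_inv, FreeGroup.lift_apply_of]
    rw [mul_inv_eq_one]
    have : Equiv.swap (i : ℕ) (i + 1) * Equiv.swap (j : ℕ) (j + 1) =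
        Equiv.swap (j : ℕ) (j + 1) * Equiv.swap (i : ℕ) (i + 1) := by
      apply swap_comm_of_ne' <;> omega
    rw [this]
  · simp only [map_mul, map_inv, FreeGroup.lift_apply_of]
    rw [mul_inv_eq_one]
    rcases hij with hij | hij
    · rw [hij]
      exact swap_braid' (by omega) (by omega) (by omega)
    · rw [hij]
      exact (swap_braid' (a := (j : ℕ)) (b := j + 1) (c := j + 1 + 1)
        (by omega) (by omega) (by omega)).symm

end Aux

/-- For `n ≥ 3`, the braid group `Bₙ` is not bi-orderable. -/
theorem braidGroup_not_biorderable (n : ℕ) (hn : 3 ≤ n) :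
    ¬ BiOrderable (BraidGroup n) := by
  intro hBO
  have h2 : 2 ≤ n - 1 := by omega
  set i0 : Fin (n - 1) := ⟨0, by omega⟩
  set i1 : Fin (n - 1) := ⟨1, by omega⟩
  set a : BraidGroup n := PresentedGroup.of i0
  set b : BraidGroup n := PresentedGroup.of i1
  -- the braid relation holds in the quotient
  have hrel : a * b * a = b * a * b := by
    have hmem : (FreeGroup.of i0 * FreeGroup.of i1 * FreeGroup.of i0 *
        (FreeGroup.of i1 * FreeGroup.of i0 * FreeGroup.of i1)⁻¹) ∈ braidRels (n - 1) :=
      Or.inr ⟨i0, i1, Or.inl rfl, rfl⟩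
    have h1 : (QuotientGroup.mk (FreeGroup.of i0 * FreeGroup.of i1 * FreeGroup.of i0 *
        (FreeGroup.of i1 * FreeGroup.of i0 * FreeGroup.of i1)⁻¹) : BraidGroup n) = 1 :=
      (QuotientGroup.eq_one_iff _).2 (Subgroup.subset_normalClosure hmem)
    have h2' : a * b * a * (b * a * b)⁻¹ = 1 := by
      simp only [QuotientGroup.mk_mul, QuotientGroup.mk_inv] at h1
      exact h1
    exact mul_inv_eq_one.mp h2'
  -- but σ₀ ≠ σ₁, as seen in the symmetric group
  have hne : a ≠ b := by
    intro hab
    have := congrArg (PresentedGroup.toGroup (braid_to_perm (n - 1))) hab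
    rw [show a = PresentedGroup.of i0 from rfl, show b = PresentedGroup.of i1 from rfl,
      PresentedGroup.toGroup.of, PresentedGroup.toGroup.of] at this
    have h01 : Equiv.swap (0 : ℕ) 1 = Equiv.swap 1 2 := by simpa using this
    have h0 := congrArg (fun e : Equiv.Perm ℕ => e 0) h01
    simp [Equiv.swap_apply_of_ne_of_ne] at h0
  exact hne (biOrderable_braid_eq hBO hrel)
end

section
/- The group ⟨a, b | aᵖ = b^q⟩ with p, q coprime integers, p, q ≥ 2, is not bi-orderable. -/
section aux

/-- Twist function. -/
def tkTw (p q : ℕ) (x : ZMod p) : ZMod q := if x = 0 then 1 else 0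

def tkA (p q : ℕ) : Equiv.Perm (ZMod p × ZMod q) :=
  (Equiv.addLeft (1 : ZMod p)).prodCongr (Equiv.refl _)

def tkB (p q : ℕ) : Equiv.Perm (ZMod p × ZMod q) where
  toFun z := (z.1, z.2 + tkTw p q z.1)
  invFun z := (z.1, z.2 - tkTw p q z.1)
  left_inv z := by simp
  right_inv z := by simp

lemma tkA_pow (p q n : ℕ) (z : ZMod p × ZMod q) :
    (tkA p q ^ n) z = ((n : ZMod p) + z.1, z.2) := by
  induction n generalizing z with
  | zero => simp
  | succ n ih =>
    rw [pow_succ, Equiv.Perm.mul_apply, ih]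
    simp [tkA, Prod.ext_iff]
    ring

lemma tkB_pow (p q n : ℕ) (z : ZMod p × ZMod q) :
    (tkB p q ^ n) z = (z.1, z.2 + (n : ZMod q) * tkTw p q z.1) := by
  induction n generalizing z with
  | zero => simp
  | succ n ih =>
    rw [pow_succ, Equiv.Perm.mul_apply, ih]
    simp [tkB, Prod.ext_iff]
    ring

lemma tkA_pow_p (p q : ℕ) : tkA p q ^ p = 1 :=
  Equiv.ext fun z => by rw [tkA_pow]; simp

lemma tkB_pow_q (p q : ℕ) : tkB p q ^ q = 1 :=
  Equiv.ext fun z => by rw [tkB_pow]; simp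

lemma tk_not_comm (p q : ℕ) (hp : 2 ≤ p) (hq : 2 ≤ q) :
    tkA p q * tkB p q ≠ tkB p q * tkA p q := by
  haveI : Fact (1 < p) := ⟨hp⟩
  haveI : Fact (1 < q) := ⟨hq⟩
  intro h
  have h0 := congrArg (fun e : Equiv.Perm (ZMod p × ZMod q) => e (0, 0)) h
  simp only [Equiv.Perm.mul_apply] at h0
  have hB0 : tkB p q (0, 0) = (0, 1) := by simp [tkB, tkTw]
  have hA0 : tkA p q (0, 0) = (1, 0) := by simp [tkA, Prod.ext_iff]
  rw [hB0, hA0] at h0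
  have hA1 : tkA p q ((0 : ZMod p), (1 : ZMod q)) = (1, 1) := by simp [tkA, Prod.ext_iff]
  have hB1 : tkB p q ((1 : ZMod p), (0 : ZMod q)) = (1, 0) := by
    simp [tkB, tkTw, (one_ne_zero : (1 : ZMod p) ≠ 0)]
  rw [hA1, hB1] at h0
  have : (1 : ZMod q) = 0 := (Prod.ext_iff.mp h0).2
  exact one_ne_zero this

/-- key bi-order step: strict inequality is preserved by powers. -/
lemma biorder_pow {G : Type*} [Group G] {r : G → G → Prop}
    (htr : ∀ a b c : G, r a b → r b c → r a c)
    (hl : ∀ f g h : G, r g h → r (f * g) (f * h))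
    (hr : ∀ f g h : G, r g h → r (g * f) (h * f))
    {u v : G} (huv : r u v) : ∀ n : ℕ, r (u ^ (n + 1)) (v ^ (n + 1)) := by
  intro n
  induction n with
  | zero => simpa using huv
  | succ n ih =>
    have h1 : r (u ^ (n + 1) * u) (v ^ (n + 1) * u) := hr _ _ _ ih
    have h2 : r (v ^ (n + 1) * u) (v ^ (n + 1) * v) := hl _ _ _ huv
    have := htr _ _ _ h1 h2
    rwa [← pow_succ, ← pow_succ] at this

lemma biorder_commute {G : Type*} [Group G] {r : G → G → Prop}
    (hto : IsStrictTotalOrder G r)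
    (hl : ∀ f g h : G, r g h → r (f * g) (f * h))
    (hr : ∀ f g h : G, r g h → r (g * f) (h * f))
    (x h : G) (q : ℕ) (hq : 1 ≤ q) (hc : x * h ^ q = h ^ q * x) :
    x * h = h * x := by
  haveI := hto
  have htr : ∀ a b c : G, r a b → r b c → r a c := fun a b c => trans_of r
  set k := x * h * x⁻¹ with hk
  have hkq : k ^ q = h ^ q := by
    rw [hk, conj_pow, hc, mul_inv_cancel_right]
  obtain ⟨m, rfl⟩ : ∃ m, q = m + 1 := ⟨q - 1, by omega⟩
  rcases trichotomous_of r h k with h1 | h1 | h1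
  · exact absurd (hkq ▸ biorder_pow htr hl hr h1 m) (irrefl_of r _)
  · have : x * h * x⁻¹ = h := h1 ▸ hk.symm
    exact mul_inv_eq_iff_eq_mul.mp this
  · exact absurd (hkq ▸ biorder_pow htr hl hr h1 m) (irrefl_of r _)

end aux

/-- The torus knot group `⟨a, b | aᵖ = b^q⟩` with `p, q ≥ 2` coprime is not
bi-orderable.  Here `a = of true`, `b = of false`. -/
theorem torus_knot_group_not_biorderable (p q : ℕ) (hp : 2 ≤ p) (hq : 2 ≤ q)
    (hpq : Nat.Coprime p q) :
    ¬ BiOrderable (PresentedGroup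
      ({FreeGroup.of true ^ p * (FreeGroup.of false ^ q)⁻¹} : Set (FreeGroup Bool))) := by
  rintro ⟨r, hto, hl, hr⟩
  set rels : Set (FreeGroup Bool) :=
    {FreeGroup.of true ^ p * (FreeGroup.of false ^ q)⁻¹} with hrels
  set a : PresentedGroup rels := PresentedGroup.of true with ha
  set b : PresentedGroup rels := PresentedGroup.of false with hb
  -- the relation a^p = b^q
  have hrel : a ^ p = b ^ q := by
    have h1 : (QuotientGroup.mk' (Subgroup.normalClosure rels))
        (FreeGroup.of true ^ p * (FreeGroup.of false ^ q)⁻¹) = 1 := by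
      rw [QuotientGroup.mk'_apply, QuotientGroup.eq_one_iff]
      exact Subgroup.subset_normalClosure rfl
    rw [map_mul, map_inv, map_pow, map_pow, mul_inv_eq_one] at h1
    exact h1
  -- a commutes with b^q
  have hc : a * b ^ q = b ^ q * a := by
    rw [← hrel, ← pow_succ', ← pow_succ]
  -- bi-orderability forces a and b to commute
  have hab : a * b = b * a := biorder_commute hto hl hr a b q (by omega) hc
  -- map to the permutation group
  have hmap : ∀ s ∈ rels, FreeGroup.lift
      (fun t : Bool => if t then tkA p q else tkB p q) s = 1 := by
    intro s hs
    rw [hrels] at hs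
    rw [Set.mem_singleton_iff] at hs
    subst hs
    simp [tkA_pow_p, tkB_pow_q]
  have hA : PresentedGroup.toGroup hmap a = tkA p q := by
    rw [ha, PresentedGroup.toGroup.of]; rfl
  have hB : PresentedGroup.toGroup hmap b = tkB p q := by
    rw [hb, PresentedGroup.toGroup.of]; rfl
  have := congrArg (PresentedGroup.toGroup hmap) hab
  rw [map_mul, map_mul, hA, hB] at this
  exact tk_not_comm p q hp hq this
end

section
/- The fundamental group of the Weeks manifold, ⟨a, b | babab = ab⁻²a, ababa = ba⁻²b⟩, is not left-orderable. -/
/-- The fundamental group of the Weeks manifold,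
`⟨a, b | babab = ab⁻²a, ababa = ba⁻²b⟩`, with `a = of true`, `b = of false`. -/
abbrev WeeksGroup : Type := PresentedGroup
  ({(FreeGroup.of false * FreeGroup.of true * FreeGroup.of false * FreeGroup.of true *
      FreeGroup.of false) *
      (FreeGroup.of true * (FreeGroup.of false)⁻¹ * (FreeGroup.of false)⁻¹ *
        FreeGroup.of true)⁻¹,
    (FreeGroup.of true * FreeGroup.of false * FreeGroup.of true * FreeGroup.of false *
      FreeGroup.of true) *
      (FreeGroup.of false * (FreeGroup.of true)⁻¹ * (FreeGroup.of true)⁻¹ *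
        FreeGroup.of false)⁻¹} : Set (FreeGroup Bool))

def LeftOrderable (G : Type*) [Group G] : Prop :=
  ∃ r : G → G → Prop, IsStrictTotalOrder G r ∧ ∀ f g h : G, r g h → r (f * g) (f * h)

/-- Core algebraic lemma: in any group with the Weeks relations, a left-invariant strict
total order cannot have `1 < a`. -/
lemma weeks_core {G : Type*} [Group G] (r : G → G → Prop)
    (ht : IsStrictTotalOrder G r) (hmul : ∀ f g h : G, r g h → r (f * g) (f * h))
    (a b : G) (rel1 : b * a * b * a * b = a * b⁻¹ * b⁻¹ * a)
    (rel2 : a * b * a * b * a = b * a⁻¹ * a⁻¹ * b) (ha : r 1 a) : False := by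
  have htri : ∀ x y : G, r x y ∨ x = y ∨ r y x := by
    haveI := ht; exact trichotomous_of (r := r)
  have htrans : ∀ {x y z : G}, r x y → r y z → r x z := fun h1 h2 => ht.trans _ _ _ h1 h2
  have hirr : ∀ x : G, ¬ r x x := ht.irrefl
  -- basic order facts
  have posmul : ∀ x y : G, r 1 x → r 1 y → r 1 (x * y) := by
    intro x y hx hy
    have := hmul x 1 y hy; rw [mul_one] at this; exact htrans hx this
  have negmul : ∀ x y : G, r x 1 → r y 1 → r (x * y) 1 := by
    intro x y hx hy
    have := hmul x y 1 hy; rw [mul_one] at this; exact htrans this hx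
  have invpos : ∀ x : G, r x 1 → r 1 x⁻¹ := by
    intro x hx
    have := hmul x⁻¹ x 1 hx; rwa [inv_mul_cancel, mul_one] at this
  have invneg : ∀ x : G, r 1 x → r x⁻¹ 1 := by
    intro x hx
    have := hmul x⁻¹ 1 x hx; rwa [inv_mul_cancel, mul_one] at this
  have contra : ∀ x : G, r 1 x → r x 1 → False := fun x h1 h2 => hirr 1 (htrans h1 h2)
  -- derived relations
  have Aab : a * b * a * b = b⁻¹ * a * b⁻¹ * b⁻¹ * a := by
    rw [show b⁻¹ * a * b⁻¹ * b⁻¹ * a = b⁻¹ * (a * b⁻¹ * b⁻¹ * a) by group, ← rel1]; group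
  have Bab : a * b * a * b = b * a⁻¹ * a⁻¹ * b * a⁻¹ := by
    rw [show b * a⁻¹ * a⁻¹ * b * a⁻¹ = (b * a⁻¹ * a⁻¹ * b) * a⁻¹ by group, ← rel2]; group
  have Aba : b * a * b * a = a⁻¹ * b * a⁻¹ * a⁻¹ * b := by
    rw [show a⁻¹ * b * a⁻¹ * a⁻¹ * b = a⁻¹ * (b * a⁻¹ * a⁻¹ * b) by group, ← rel2]; group
  have ha' : r a⁻¹ 1 := invneg a ha
  rcases htri b 1 with hb | hb | hb
  · -- b < 1 : then (ab)² = b⁻¹ab⁻²a > 1 and (ab)² = ba⁻²ba⁻¹ < 1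
    have hb' : r 1 b⁻¹ := invpos b hb
    have hpos : r 1 (a * b * a * b) := by
      rw [Aab]; exact posmul _ _ (posmul _ _ (posmul _ _ (posmul _ _ hb' ha) hb') hb') ha
    have hneg : r (a * b * a * b) 1 := by
      rw [Bab]; exact negmul _ _ (negmul _ _ (negmul _ _ (negmul _ _ hb ha') ha') hb) ha'
    exact contra _ hpos hneg
  · -- b = 1 : then a⁵ = 1
    subst hb
    have h : a * a * a = a⁻¹ * a⁻¹ := by
      have := rel2; simpa using this
    have h5 : a * a * (a * a * a) = 1 := by rw [h]; group
    have : r 1 (a * a * (a * a * a)) :=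
      posmul _ _ (posmul _ _ ha ha) (posmul _ _ (posmul _ _ ha ha) ha)
    rw [h5] at this; exact hirr 1 this
  · -- b > 1
    rcases htri a b with hab | hab | hab
    · -- a < b : (ab)² = (b⁻¹a)b⁻¹(b⁻¹a) < 1, but ab > 1
      have h1 : r (b⁻¹ * a) 1 := by
        have := hmul b⁻¹ a b hab; rwa [inv_mul_cancel] at this
      have hpos : r 1 (a * b * a * b) :=
        posmul _ _ (posmul _ _ (posmul _ _ ha hb) ha) hb
      have hneg : r (a * b * a * b) 1 := by
        rw [Aab, show b⁻¹ * a * b⁻¹ * b⁻¹ * a = ((b⁻¹ * a) * b⁻¹) * (b⁻¹ * a) by group]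
        exact negmul _ _ (negmul _ _ h1 (invneg b hb)) h1
      exact contra _ hpos hneg
    · -- a = b : then a⁵ = 1
      subst hab
      have h5 : a * a * a * a * a = 1 := by rw [rel1]; group
      have : r 1 (a * a * a * a * a) :=
        posmul _ _ (posmul _ _ (posmul _ _ (posmul _ _ ha ha) ha) ha) ha
      rw [h5] at this; exact hirr 1 this
    · -- b < a : (ba)² = (a⁻¹b)a⁻¹(a⁻¹b) < 1, but ba > 1
      have h1 : r (a⁻¹ * b) 1 := by
        have := hmul a⁻¹ b a hab; rwa [inv_mul_cancel] at this
      have hpos : r 1 (b * a * b * a) :=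
        posmul _ _ (posmul _ _ (posmul _ _ hb ha) hb) ha
      have hneg : r (b * a * b * a) 1 := by
        rw [Aba, show a⁻¹ * b * a⁻¹ * a⁻¹ * b = ((a⁻¹ * b) * a⁻¹) * (a⁻¹ * b) by group]
        exact negmul _ _ (negmul _ _ h1 ha') h1
      exact contra _ hpos hneg

/-- The fundamental group of the Weeks manifold is not left-orderable. -/
theorem weeksGroup_not_leftOrderable : ¬ LeftOrderable WeeksGroup := by
  rintro ⟨r, ht, hmul⟩
  set rels : Set (FreeGroup Bool) :=
    ({(FreeGroup.of false * FreeGroup.of true * FreeGroup.of false * FreeGroup.of true *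
      FreeGroup.of false) *
      (FreeGroup.of true * (FreeGroup.of false)⁻¹ * (FreeGroup.of false)⁻¹ *
        FreeGroup.of true)⁻¹,
    (FreeGroup.of true * FreeGroup.of false * FreeGroup.of true * FreeGroup.of false *
      FreeGroup.of true) *
      (FreeGroup.of false * (FreeGroup.of true)⁻¹ * (FreeGroup.of true)⁻¹ *
        FreeGroup.of false)⁻¹} : Set (FreeGroup Bool)) with hrels
  have key : ∀ x ∈ rels, (QuotientGroup.mk x : PresentedGroup rels) = 1 := fun x hx =>
    (QuotientGroup.eq_one_iff x).mpr (Subgroup.subset_normalClosure hx)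
  set a : WeeksGroup := PresentedGroup.of true with hA
  set b : WeeksGroup := PresentedGroup.of false with hB
  have rel1 : b * a * b * a * b = a * b⁻¹ * b⁻¹ * a := by
    have h := key _ (Set.mem_insert _ _)
    simp only [QuotientGroup.mk_mul, QuotientGroup.mk_inv] at h
    rw [mul_inv_eq_one] at h
    exact h
  have rel2 : a * b * a * b * a = b * a⁻¹ * a⁻¹ * b := by
    have h := key _ (Set.mem_insert_iff.mpr (Or.inr rfl))
    simp only [QuotientGroup.mk_mul, QuotientGroup.mk_inv] at h
    rw [mul_inv_eq_one] at h
    exact h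
  -- nontriviality of `a`, via the abelianization map to `ZMod 5`
  have hane : a ≠ 1 := by
    set f : Bool → Multiplicative (ZMod 5) := fun x => if x then Multiplicative.ofAdd 1 else 1
      with hf
    have hrel : ∀ x ∈ rels, FreeGroup.lift f x = 1 := by
      intro x hx
      rcases hx with h | h <;> subst h <;> simp [hf] <;> decide
    intro h1
    have := congrArg (PresentedGroup.toGroup hrel) h1
    rw [hA, PresentedGroup.toGroup.of, map_one] at this
    simp [hf] at this
    exact absurd this (by decide)
  rcases (haveI := ht; trichotomous_of (r := r) 1 a) with ha | ha | ha
  · exact weeks_core r ht hmul a b rel1 rel2 ha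
  · exact hane ha.symm
  · -- use the reversed order
    have ht' : IsStrictTotalOrder WeeksGroup (fun x y => r y x) := by
      haveI : IsTrichotomous WeeksGroup (fun x y => r y x) := ⟨fun x y h1 h2 => by
        rcases (haveI := ht; trichotomous_of (r := r) x y) with h | h | h
        · exact absurd h h2
        · exact h
        · exact absurd h h1⟩
      haveI : IsIrrefl WeeksGroup (fun x y => r y x) := ⟨fun x => ht.irrefl x⟩
      haveI : IsTrans WeeksGroup (fun x y => r y x) := ⟨fun x y z h1 h2 => ht.trans _ _ _ h2 h1⟩
      haveI : IsStrictOrder WeeksGroup (fun x y => r y x) := { }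
      exact { }
    exact weeks_core (fun x y => r y x) ht' (fun f g h hgh => hmul f h g hgh) a b rel1 rel2 ha
end
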